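/- If a polymatroid f on {s}∪P realizes a connected access structure A ⊆ 2^P, then f is connected as a polymatroid: for every partition of {s}∪P into nonempty A, B, f(A)+f(B) > f({s}∪P). -/
import Mathlib


/-- The polymatroid rank function `f` on ground set `{s} ∪ P` realizes the access
structure `𝒜 ⊆ 2^P`. -/
def Realizes {α : Type*} [DecidableEq α] (s : α) (P : Finset α) (𝒜 : Set (Finset α))
    (f : Finset α → ℝ) : Prop :=
  ∀ A : Finset α, A ⊆ P →
    (A ∈ 𝒜 ↔ f (insert s A) = f A) ∧ (A ∉ 𝒜 ↔ f (insert s A) = f A + f {s})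

/-- A polymatroid realizing a connected access structure is connected. -/
theorem realizing_connected_is_connected {α : Type*} [DecidableEq α] (s : α) (P : Finset α)
    (hs : s ∉ P) (𝒜 : Set (Finset α)) (f : Finset α → ℝ)
    (hempty : f ∅ = 0)
    (hnonneg : ∀ A, A ⊆ insert s P → 0 ≤ f A)
    (hmono : ∀ A B : Finset α, A ⊆ B → B ⊆ insert s P → f A ≤ f B)
    (hsub : ∀ A B : Finset α, A ⊆ insert s P → B ⊆ insert s P →
        f (A ∪ B) + f (A ∩ B) ≤ f A + f B)
    (hreal : Realizes s P 𝒜 f)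
    (hconn : ∀ i ∈ P, ∃ B : Finset α, B ⊆ P \ {i} ∧ B ∉ 𝒜 ∧ insert i B ∈ 𝒜) :
    ∀ A B : Finset α, A ∪ B = insert s P → Disjoint A B → A.Nonempty → B.Nonempty →
      f A + f B > f (insert s P) := by
  have main : ∀ A B : Finset α, A ∪ B = insert s P → Disjoint A B → s ∈ A → B.Nonempty →
      f A + f B > f (insert s P) := by
    intro A B hunion hdisj hsA hBne
    have hAM : A ⊆ insert s P := hunion ▸ Finset.subset_union_left
    have hBM : B ⊆ insert s P := hunion ▸ Finset.subset_union_right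
    have hsB : s ∉ B := fun h => Finset.disjoint_left.mp hdisj hsA h
    have hBP : B ⊆ P := by
      intro x hx
      rcases Finset.mem_insert.mp (hBM hx) with h | h
      · exact absurd (h ▸ hx) hsB
      · exact h
    obtain ⟨i, hiB⟩ := hBne
    have hiP : i ∈ P := hBP hiB
    obtain ⟨C, hCsub, hCno, hCyes⟩ := hconn i hiP
    have hCP : C ⊆ P := hCsub.trans (Finset.sdiff_subset)
    have hiC : i ∉ C := fun h => by
      have := hCsub h; simp [Finset.mem_sdiff] at this
    have h1 : f (insert s C) = f C + f {s} := ((hreal C hCP).2).mp hCno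
    have hiCP : insert i C ⊆ P := Finset.insert_subset hiP hCP
    have h2 : f (insert s (insert i C)) = f (insert i C) := ((hreal _ hiCP).1).mp hCyes
    have hsne : f {s} ≠ 0 := by
      intro h0
      have : f (insert s C) = f C := by rw [h1, h0, add_zero]
      exact hCno (((hreal C hCP).1).mpr this)
    have hsM : {s} ⊆ insert s P := by simp
    have hspos : 0 < f {s} := lt_of_le_of_ne (hnonneg _ hsM) (Ne.symm hsne)
    have hiA : i ∉ A := fun h => Finset.disjoint_left.mp hdisj h hiB
    have hsC : s ∉ C := fun h => hs (hCP h)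
    have hPM : P ⊆ insert s P := Finset.subset_insert _ _
    have hCM : C ⊆ insert s P := hCP.trans hPM
    have hCBM : C ∩ B ⊆ insert s P := (Finset.inter_subset_left).trans hCM
    have hXM : A ∪ C ∩ B ⊆ insert s P := Finset.union_subset hAM hCBM
    have hYM : insert i (C ∩ B) ⊆ insert s P :=
      Finset.insert_subset (hPM hiP) hCBM
    have hX'M : insert s C ⊆ insert s P := Finset.insert_subset (Finset.mem_insert_self _ _) hCM
    have hXYM : (A ∪ C ∩ B) ∪ insert i (C ∩ B) ⊆ insert s P := Finset.union_subset hXM hYM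
    have hX'YM : insert s C ∪ insert i (C ∩ B) ⊆ insert s P := Finset.union_subset hX'M hYM
    -- element facts
    have hmemAB : ∀ x, x ∈ A → x ∉ B := fun x hx => Finset.disjoint_left.mp hdisj hx
    have hmemC : ∀ x, x ∈ C → x ∈ A ∨ x ∈ B := fun x hx => by
      have : x ∈ A ∪ B := hunion ▸ (hPM (hCP hx))
      exact Finset.mem_union.mp this
    -- set identities
    have eACB : A ∩ (C ∩ B) = ∅ := by
      ext x
      simp only [Finset.mem_inter, Finset.notMem_empty, iff_false, not_and]
      intro hx hc hb; exact hmemAB x hx hb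
    have eXYB : ((A ∪ C ∩ B) ∪ insert i (C ∩ B)) ∪ B = insert s P := by
      rw [← hunion]
      ext x
      simp only [Finset.mem_union, Finset.mem_inter, Finset.mem_insert]
      constructor
      · rintro (((h | ⟨h1', h2'⟩) | (h | ⟨h1', h2'⟩)) | h)
        · exact Or.inl h
        · exact Or.inr h2'
        · exact Or.inr (h ▸ hiB)
        · exact Or.inr h2'
        · exact Or.inr h
      · rintro (h | h)
        · exact Or.inl (Or.inl (Or.inl h))
        · exact Or.inr h
    have eXYiB : ((A ∪ C ∩ B) ∪ insert i (C ∩ B)) ∩ B = insert i (C ∩ B) := by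
      ext x
      simp only [Finset.mem_inter, Finset.mem_union, Finset.mem_insert]
      constructor
      · rintro ⟨(h | h) | h, hb⟩
        · exact absurd hb (hmemAB x h)
        · exact Or.inr h
        · exact h
      · rintro (h | ⟨hc, hb⟩)
        · exact ⟨Or.inr (Or.inl h), h ▸ hiB⟩
        · exact ⟨Or.inl (Or.inr ⟨hc, hb⟩), hb⟩
    have eXpYu : (insert s C ∪ insert i (C ∩ B)) ∪ (A ∪ C ∩ B)
        = (A ∪ C ∩ B) ∪ insert i (C ∩ B) := by
      ext x
      simp only [Finset.mem_union, Finset.mem_insert, Finset.mem_inter]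
      constructor
      · rintro (((h | h) | (h | h)) | (h | h))
        · exact Or.inl (Or.inl (h ▸ hsA))
        · rcases hmemC x h with ha | hb
          · exact Or.inl (Or.inl ha)
          · exact Or.inl (Or.inr ⟨h, hb⟩)
        · exact Or.inr (Or.inl h)
        · exact Or.inl (Or.inr h)
        · exact Or.inl (Or.inl h)
        · exact Or.inl (Or.inr h)
      · rintro ((h | h) | (h | h))
        · exact Or.inr (Or.inl h)
        · exact Or.inr (Or.inr h)
        · exact Or.inl (Or.inr (Or.inl h))
        · exact Or.inl (Or.inr (Or.inr h))
    have eXpYi : (insert s C ∪ insert i (C ∩ B)) ∩ (A ∪ C ∩ B) = insert s C := by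
      ext x
      simp only [Finset.mem_inter, Finset.mem_union, Finset.mem_insert]
      constructor
      · rintro ⟨(h | h) | (h | h), hx2⟩
        · exact Or.inl h
        · exact Or.inr h
        · subst h
          rcases hx2 with ha | ⟨hc, _⟩
          · exact absurd ha hiA
          · exact absurd hc hiC
        · exact Or.inr h.1
      · rintro (h | h)
        · exact ⟨Or.inl (Or.inl h), Or.inl (h ▸ hsA)⟩
        · refine ⟨Or.inl (Or.inr h), ?_⟩
          rcases hmemC x h with ha | hb
          · exact Or.inl ha
          · exact Or.inr ⟨h, hb⟩
    have eX'Y : insert s C ∪ insert i (C ∩ B) = insert s (insert i C) := by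
      ext x
      simp only [Finset.mem_union, Finset.mem_insert, Finset.mem_inter]
      constructor
      · rintro ((h | h) | (h | h))
        · exact Or.inl h
        · exact Or.inr (Or.inr h)
        · exact Or.inr (Or.inl h)
        · exact Or.inr (Or.inr h.1)
      · rintro (h | (h | h))
        · exact Or.inl (Or.inl h)
        · exact Or.inr (Or.inl h)
        · exact Or.inl (Or.inr h)
    have eCYu : C ∪ insert i (C ∩ B) = insert i C := by
      ext x
      simp only [Finset.mem_union, Finset.mem_insert, Finset.mem_inter]
      constructor
      · rintro (h | (h | h))
        · exact Or.inr h
        · exact Or.inl h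
        · exact Or.inr h.1
      · rintro (h | h)
        · exact Or.inr (Or.inl h)
        · exact Or.inl h
    have eCYi : C ∩ insert i (C ∩ B) = C ∩ B := by
      ext x
      simp only [Finset.mem_inter, Finset.mem_insert]
      constructor
      · rintro ⟨hc, h | h⟩
        · exact absurd (h ▸ hc) hiC
        · exact h
      · rintro ⟨hc, hb⟩
        exact ⟨hc, Or.inr ⟨hc, hb⟩⟩
    -- submodularity instances
    have sa := hsub A (C ∩ B) hAM hCBM
    rw [eACB, hempty] at sa
    have sb := hsub ((A ∪ C ∩ B) ∪ insert i (C ∩ B)) B hXYM hBM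
    rw [eXYB, eXYiB] at sb
    have sc := hsub (insert s C ∪ insert i (C ∩ B)) (A ∪ C ∩ B) hX'YM hXM
    rw [eXpYu, eXpYi, eX'Y, h2] at sc
    have se := hsub C (insert i (C ∩ B)) hCM hYM
    rw [eCYu, eCYi] at se
    linarith
  intro A B hunion hdisj hA hB
  have hsAB : s ∈ A ∪ B := hunion ▸ Finset.mem_insert_self s P
  rcases Finset.mem_union.mp hsAB with h | h
  · exact main A B hunion hdisj h hB
  · have := main B A (by rw [Finset.union_comm]; exact hunion) hdisj.symm h hA
    linarith
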